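/- Let G = (V, E) be an ordered Θ_k-graph with k ≥ 2 on n vertices, and let s ∈ V be any source vertex and t ∈ V any destination vertex. Then: (1) the descending walk of A^down starting at s is well-defined and reaches v₁ in at most n − 1 hops; (2) the state sequence of A^up(v₁, t) is well-defined until reaching t, and there exists m ≤ 2n such that its current vertex after m steps equals t. Consequently, the two-phase algorithm A(s, t) — first A^down(s), then A^up(v₁, t) — routes from s to t in at most 3n hops. -/

import Mathlib

/-!
Ordered Θ_k-graphs: common definitions.

Points live in the plane, modelled as `ℂ`.  For a point `u`, the plane is
partitioned into `k` cones of aperture `θ = 2π/k`; cone `j` has as bisector the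
ray from `u` in direction `exp((π/2 - j·θ)·I)` (cone `0` points upwards, cones
are numbered clockwise).  A point `w ≠ u` lies (in the interior of) cone `j` of
`u` iff the angle between `w - u` and the bisector is `< θ/2`.  `projDist`
measures the length of the orthogonal projection of `w - u` onto the bisector
of cone `j`.  Insertion orders: vertex `i : Fin n` is the `(i+1)`-st inserted
vertex, so `ρ(v) < ρ(u)` is `v < u`.
-/

namespace OrderedTheta

noncomputable def theta (k : ℕ) : ℝ := 2 * Real.pi / k

/-- Unit vector along the bisector of the `j`-th cone. -/
noncomputable def dir (k j : ℕ) : ℂ :=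
  Complex.exp ((Real.pi / 2 - j * theta k) * Complex.I)

/-- `w` lies in the (open) cone number `j` of apex `u`. -/
def inCone (k : ℕ) (u w : ℂ) (j : ℕ) : Prop :=
  w ≠ u ∧ |Complex.arg ((w - u) / dir k j)| < theta k / 2

/-- The distance `|u w'|` from `u` to the orthogonal projection `w'` of `w`
onto the bisector of cone `j` of `u` (for `w` in the open cone `j` this equals
the signed component of `w - u` along the bisector direction). -/
noncomputable def projDist (k : ℕ) (u w : ℂ) (j : ℕ) : ℝ :=
  ((w - u) * (starRingEnd ℂ) (dir k j)).re

/-- A sequence of `n` distinct points in the plane, in general position, to be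
inserted in the order of their indices; `V i` is the `(i+1)`-st inserted point. -/
structure Config (k n : ℕ) : Type where
  two_le_k : 2 ≤ k
  V : Fin n → ℂ
  inj : Function.Injective V
  /-- no previously inserted point lies on a boundary ray of a cone of `V i`:
  every earlier point lies in the open cone of some index `c < k`. -/
  gp_cone : ∀ i j : Fin n, j < i → ∃ c < k, inCone k (V i) (V j) c
  /-- two distinct earlier points lying in a common cone of `V i` have distinct
  bisector-projection distances from `V i`. -/
  gp_dist : ∀ i j l : Fin n, j < i → l < i → j ≠ l →
    ∀ c < k, inCone k (V i) (V j) c → inCone k (V i) (V l) c →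
      projDist k (V i) (V j) c ≠ projDist k (V i) (V l) c

/-- The edge created upon insertion of `i`, towards the earlier point `j`:
`j` is inserted before `i`, and among all earlier points in the cone of `i`
containing `j`, `j` is closest (measured along the bisector). -/
def EdgeDir {k n : ℕ} (C : Config k n) (i j : Fin n) : Prop :=
  j < i ∧ ∃ c < k, inCone k (C.V i) (C.V j) c ∧
    ∀ l : Fin n, l < i → inCone k (C.V i) (C.V l) c →
      projDist k (C.V i) (C.V j) c ≤ projDist k (C.V i) (C.V l) c

/-- The ordered Θ_k-graph of a configuration, as an undirected simple graph on
`Fin n`. -/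
def graph {k n : ℕ} (C : Config k n) : SimpleGraph (Fin n) where
  Adj i j := EdgeDir C i j ∨ EdgeDir C j i
  symm := ⟨fun _ _ hij => hij.symm⟩
  loopless := by
    refine ⟨?_⟩
    intro i h
    rcases h with h | h <;> exact absurd h.1 (lt_irrefl i)

/-- `x` lies in the canonical triangle `Δ u w`: `x` lies in the cone of `u`
containing `w` and its projection onto the bisector is at distance at most
`|u w'|` from `u`. -/
def inCanonical (k : ℕ) (u w x : ℂ) : Prop :=
  ∃ c < k, inCone k u w c ∧ inCone k u x c ∧ projDist k u x c ≤ projDist k u w c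

/-- `v` is the target of an ordered Θ-routing step from `u` towards the first
inserted vertex `v₁`: it is `v₁` itself if `{u, v₁}` is an edge, and otherwise
the neighbour of `u` of smaller insertion order lying in the canonical triangle
`Δ u v₁` whose bisector projection is closest to `u`. -/
def IsRoutingStep {k n : ℕ} (C : Config k n) (hn : 0 < n) (u v : Fin n) : Prop :=
  ((graph C).Adj u ⟨0, hn⟩ ∧ v = ⟨0, hn⟩) ∨
  (¬ (graph C).Adj u ⟨0, hn⟩ ∧ (graph C).Adj u v ∧ v < u ∧
    inCanonical k (C.V u) (C.V ⟨0, hn⟩) (C.V v) ∧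
    ∀ w : Fin n, (graph C).Adj u w → w < u →
      inCanonical k (C.V u) (C.V ⟨0, hn⟩) (C.V w) →
      ∀ c < k, inCone k (C.V u) (C.V v) c → inCone k (C.V u) (C.V w) c →
        projDist k (C.V u) (C.V v) c ≤ projDist k (C.V u) (C.V w) c)

/-- `u'` is an exploration candidate neighbour of `u` (with respect to the
destination `t`): `u'` is a neighbour of `u` with `ρ(u) < ρ(u') ≤ ρ(t)` such
that `u` lies in the interior of the cone of `u'` containing `v₁`. -/
def ExplCand {k n : ℕ} (C : Config k n) (hn : 0 < n) (t u u' : Fin n) : Prop :=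
  (graph C).Adj u u' ∧ u < u' ∧ u' ≤ t ∧
  ∃ c < k, inCone k (C.V u') (C.V ⟨0, hn⟩) c ∧ inCone k (C.V u') (C.V u) c

/-- The exploration space `S(v₁)`: the smallest set of vertices containing `v₁`
and closed under taking exploration candidate neighbours. -/
inductive InExplSpace {k n : ℕ} (C : Config k n) (hn : 0 < n) (t : Fin n) : Fin n → Prop
  | base : InExplSpace C hn t ⟨0, hn⟩
  | step {u u' : Fin n} :
      InExplSpace C hn t u → ExplCand C hn t u u' → InExplSpace C hn t u'

/-- The label of a vertex: its coordinates together with its insertion order. -/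
noncomputable def label {k n : ℕ} (C : Config k n) (v : Fin n) : ℂ × ℕ :=
  (C.V v, (v : ℕ) + 1)

/-- The vertices at graph distance at most `h` from `u`. -/
def ball {k n : ℕ} (C : Config k n) (u : Fin n) (h : ℕ) : Set (Fin n) :=
  {v | ∃ p : (graph C).Walk u v, p.length ≤ h}

/-- The data visible to an `h`-local algorithm: a labelled vertex set together
with a labelled edge set. -/
abbrev LocalView : Type := Set (ℂ × ℕ) × Set ((ℂ × ℕ) × (ℂ × ℕ))

/-- The `h`-neighbourhood `B_h(u)`: the induced labelled subgraph on all
vertices at graph distance at most `h` from `u`. -/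
noncomputable def view {k n : ℕ} (C : Config k n) (u : Fin n) (h : ℕ) : LocalView :=
  (label C '' ball C u h,
   {e | ∃ a ∈ ball C u h, ∃ b ∈ ball C u h,
      (graph C).Adj a b ∧ e = (label C a, label C b)})

/-- One step of the descending algorithm `A^down`: move to the neighbour of
minimum insertion order among the neighbours of smaller insertion order. -/
def AdownStep {k n : ℕ} (C : Config k n) (u v : Fin n) : Prop :=
  (graph C).Adj u v ∧ v < u ∧ ∀ v' : Fin n, (graph C).Adj u v' → v' < u → v ≤ v'

/-- The angle of the vector `v - u`, measured counterclockwise from the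
positive horizontal direction, normalised to `[0, 2π)`. -/
noncomputable def alpha (u v : ℂ) : ℝ :=
  if 0 ≤ Complex.arg (v - u) then Complex.arg (v - u)
  else Complex.arg (v - u) + 2 * Real.pi

/-- One step of the algorithm `A^up(v₁, t)` on states
`(current vertex, previous vertex, exploration bit)`. -/
def AupStep {k n : ℕ} (C : Config k n) (hn : 0 < n) (t : Fin n)
    (s s' : Fin n × Option (Fin n) × Bool) : Prop :=
  s.1 ≠ t ∧
  ((s.2.2 = true ∧
     ((∃ v : Fin n, ExplCand C hn t s.1 v ∧
         (∀ v' : Fin n, ExplCand C hn t s.1 v' →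
           alpha (C.V s.1) (C.V v) ≤ alpha (C.V s.1) (C.V v')) ∧
         s' = (v, some s.1, true)) ∨
      ((¬ ∃ v : Fin n, ExplCand C hn t s.1 v) ∧
        ∃ u' : Fin n, IsRoutingStep C hn s.1 u' ∧ s' = (u', some s.1, false)))) ∨
   (s.2.2 = false ∧ ∃ p : Fin n, s.2.1 = some p ∧
     ((∃ v : Fin n,
         (ExplCand C hn t s.1 v ∧ alpha (C.V s.1) (C.V p) < alpha (C.V s.1) (C.V v)) ∧
         (∀ v' : Fin n, ExplCand C hn t s.1 v' →
           alpha (C.V s.1) (C.V p) < alpha (C.V s.1) (C.V v') →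
           alpha (C.V s.1) (C.V v) ≤ alpha (C.V s.1) (C.V v')) ∧
         s' = (v, some s.1, true)) ∨
      ((¬ ∃ v : Fin n, ExplCand C hn t s.1 v ∧
          alpha (C.V s.1) (C.V p) < alpha (C.V s.1) (C.V v)) ∧
        ∃ u' : Fin n, IsRoutingStep C hn s.1 u' ∧ s' = (u', some s.1, false)))))

/-- The point sequence defining `L_h^k` (0-based index `j` is the `(j+1)`-st
inserted point `v_{j+1}`). -/
noncomputable def Lpt (h k : ℕ) (ε : ℝ) (j : ℕ) : ℂ :=
  if j = 0 then 0
  else if j = 2 * h + 1 then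
    ((-2 : ℝ) : ℂ) + ((-(2 * (h : ℝ)) * ε : ℝ) : ℂ) * Complex.I
  else if j = 2 * h + 2 then
    ((-2 / Real.tan (theta k / 2) - 3 * (h : ℝ) * ε : ℝ) : ℂ) * Complex.I
  else if j % 2 = 1 then
    (((((j + 1) / 2 : ℕ) : ℝ) / (h : ℝ) : ℝ) + ((-(((j + 1) / 2 : ℕ) : ℝ) * ε : ℝ) : ℂ) * Complex.I)
  else
    ((-(((j / 2 : ℕ) : ℝ) / (h : ℝ)) : ℝ) + ((-(((j / 2 : ℕ) : ℝ)) * ε : ℝ) : ℂ) * Complex.I)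

/-- The point sequence defining `R_h^k`: identical to the one for `L_h^k`
except that `v_{2h+2}` is placed at `(2, -2hε)` instead of `(-2, -2hε)`. -/
noncomputable def Rpt (h k : ℕ) (ε : ℝ) (j : ℕ) : ℂ :=
  if j = 2 * h + 1 then ((2 : ℝ) : ℂ) + ((-(2 * (h : ℝ)) * ε : ℝ) : ℂ) * Complex.I
  else Lpt h k ε j


/-! ### Auxiliary development -/

lemma theta_pos {k : ℕ} (hk : 0 < k) : 0 < theta k := by
  unfold theta
  positivity

lemma k_mul_theta {k : ℕ} (hk : 0 < k) : (k : ℝ) * theta k = 2 * Real.pi := by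
  unfold theta
  field_simp

lemma arg_exp_real_mul_I_angle (r : ℝ) :
    ((Complex.exp ((r : ℂ) * Complex.I)).arg : Real.Angle) = (r : Real.Angle) := by
  rw [Complex.exp_mul_I]
  have h1 : Complex.cos (r : ℂ) = ((Real.cos r : ℝ) : ℂ) := by
    rw [Complex.ofReal_cos]
  have h2 : Complex.sin (r : ℂ) = ((Real.sin r : ℝ) : ℂ) := by
    rw [Complex.ofReal_sin]
  rw [h1, h2]
  have := Complex.arg_cos_add_sin_mul_I_coe_angle (r : Real.Angle)
  rwa [Real.Angle.cos_coe, Real.Angle.sin_coe] at this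

lemma dir_ne_zero (k j : ℕ) : dir k j ≠ 0 := Complex.exp_ne_zero _

lemma cone_unique {k : ℕ} (hk : 0 < k) {u w : ℂ} {c c' : ℕ} (hc : c < k) (hc' : c' < k)
    (h : inCone k u w c) (h' : inCone k u w c') : c = c' := by
  have hθ := theta_pos hk
  obtain ⟨hzu, ha⟩ := h
  obtain ⟨_, hb⟩ := h'
  set z : ℂ := w - u with hz
  have hz0 : z ≠ 0 := sub_ne_zero.mpr hzu
  set r : ℝ := ((c : ℝ) - (c' : ℝ)) * theta k with hr
  have hdd : Complex.exp ((r : ℂ) * Complex.I) = dir k c' / dir k c := by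
    unfold dir
    rw [← Complex.exp_sub]
    congr 1
    rw [hr]
    push_cast
    ring
  have hsplit : z / dir k c = (z / dir k c') * Complex.exp ((r : ℂ) * Complex.I) := by
    rw [hdd, div_mul_div_comm, mul_comm z (dir k c'), mul_div_mul_left _ _ (dir_ne_zero k c')]
  have hne1 : z / dir k c' ≠ 0 := div_ne_zero hz0 (dir_ne_zero k c')
  have hne2 : Complex.exp ((r : ℂ) * Complex.I) ≠ 0 := Complex.exp_ne_zero _
  have hangle : ((z / dir k c).arg : Real.Angle)
      = (((z / dir k c').arg + r : ℝ) : Real.Angle) := by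
    rw [hsplit, Complex.arg_mul_coe_angle hne1 hne2, arg_exp_real_mul_I_angle,
      Real.Angle.coe_add]
  obtain ⟨m, hm⟩ := Real.Angle.angle_eq_iff_two_pi_dvd_sub.mp hangle
  -- hm : (z / dir k c).arg - ((z / dir k c').arg + r) = 2 * π * m
  have h2pi : 2 * Real.pi = (k : ℝ) * theta k := (k_mul_theta hk).symm
  have hkey : (z / dir k c).arg - (z / dir k c').arg
      = theta k * (((c : ℤ) - (c' : ℤ) + (k : ℤ) * m : ℤ) : ℝ) := by
    push_cast
    rw [h2pi] at hm
    linarith [hm]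
  set e : ℤ := (c : ℤ) - (c' : ℤ) + (k : ℤ) * m with he
  have habs : |theta k * (e : ℝ)| < theta k := by
    rw [← hkey]
    calc |(z / dir k c).arg - (z / dir k c').arg|
        ≤ |(z / dir k c).arg| + |(z / dir k c').arg| := abs_sub _ _
      _ < theta k / 2 + theta k / 2 := by exact add_lt_add ha hb
      _ = theta k := by ring
  have he0 : e = 0 := by
    have h1 : |(e : ℝ)| < 1 := by
      rw [abs_mul, abs_of_pos hθ] at habs
      nlinarith [abs_nonneg ((e : ℝ))]
    have h3 : ((|e| : ℤ) : ℝ) < 1 := by rw [Int.cast_abs]; exact h1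
    exact Int.abs_lt_one_iff.mp (by exact_mod_cast h3)
  have hcc : (c : ℤ) - (c' : ℤ) = -((k : ℤ) * m) := by
    have h4 := he0
    rw [he] at h4
    linarith
  have hcklt : |(c : ℤ) - (c' : ℤ)| < (k : ℤ) := by
    rw [abs_sub_lt_iff]
    constructor <;> [skip; skip] <;> omega
  rw [hcc, abs_neg, abs_mul] at hcklt
  have hm0 : m = 0 := by
    rcases eq_or_ne m 0 with h | h
    · exact h
    · exfalso
      have : (1 : ℤ) ≤ |m| := Int.one_le_abs h
      have hk' : (0:ℤ) < k := by exact_mod_cast hk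
      rw [abs_of_pos hk'] at hcklt
      nlinarith
  rw [hm0, mul_zero, neg_zero] at hcc
  omega


section Main

variable {k n : ℕ} (C : Config k n) (hn : 0 < n) (t : Fin n)

/-- The first inserted vertex. -/
def vz : Fin n := ⟨0, hn⟩

lemma kpos {k' n' : ℕ} (C' : Config k' n') : 0 < k' := lt_of_lt_of_le two_pos C'.two_le_k

lemma vz_le (u : Fin n) : vz hn ≤ u := by
  simp [vz, Fin.le_def]

lemma vz_lt_of_ne {u : Fin n} (h : u ≠ vz hn) : vz hn < u :=
  lt_of_le_of_ne (vz_le hn u) (Ne.symm h)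

/-- `v` is the earliest-projection neighbour of `u` in the cone containing `v₁`. -/
def Q (u v : Fin n) : Prop :=
  v < u ∧ ∃ c < k, inCone k (C.V u) (C.V (vz hn)) c ∧ inCone k (C.V u) (C.V v) c ∧
    ∀ l : Fin n, l < u → inCone k (C.V u) (C.V l) c →
      projDist k (C.V u) (C.V v) c ≤ projDist k (C.V u) (C.V l) c

lemma exQ {u : Fin n} (hu : vz hn < u) : ∃ v, Q C hn u v := by
  classical
  obtain ⟨c, hck, hc0⟩ := C.gp_cone u (vz hn) hu
  set P : Finset (Fin n) :=
    Finset.univ.filter (fun j => j < u ∧ inCone k (C.V u) (C.V j) c) with hP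
  have hPne : P.Nonempty := ⟨vz hn, by simp [hP, hu, hc0]⟩
  obtain ⟨w, hwP, hmin⟩ := P.exists_min_image (fun j => projDist k (C.V u) (C.V j) c) hPne
  rw [hP, Finset.mem_filter] at hwP
  refine ⟨w, hwP.2.1, c, hck, hc0, hwP.2.2, ?_⟩
  intro l hl hlC
  exact hmin l (by simp [hP, hl, hlC])

lemma uniqQ {u v v' : Fin n} (h : Q C hn u v) (h' : Q C hn u v') : v = v' := by
  obtain ⟨hv, c, hck, hc0, hcv, hmin⟩ := h
  obtain ⟨hv', c', hck', hc0', hcv', hmin'⟩ := h'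
  have hcc : c = c' := cone_unique (kpos C) hck hck' hc0 hc0'
  subst hcc
  by_contra hne
  exact C.gp_dist u v v' hv hv' hne c hck hcv hcv'
    (le_antisymm (hmin v' hv' hcv') (hmin' v hv hcv))

/-- The ordered Θ-routing step target of `u` towards `v₁`. -/
noncomputable def par (u : Fin n) : Fin n :=
  if h : vz hn < u then Classical.choose (exQ C hn h) else u

lemma par_spec {u : Fin n} (hu : vz hn < u) : Q C hn u (par C hn u) := by
  rw [par, dif_pos hu]
  exact Classical.choose_spec (exQ C hn hu)

lemma par_lt {u : Fin n} (hu : vz hn < u) : par C hn u < u := (par_spec C hn hu).1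

lemma par_eq_of_Q {u v : Fin n} (hu : vz hn < u) (h : Q C hn u v) : par C hn u = v :=
  uniqQ C hn (par_spec C hn hu) h

lemma edgeDir_par {u : Fin n} (hu : vz hn < u) : EdgeDir C u (par C hn u) := by
  obtain ⟨h1, c, hck, hc0, hcv, hmin⟩ := par_spec C hn hu
  exact ⟨h1, c, hck, hcv, hmin⟩

lemma adj_par {u : Fin n} (hu : vz hn < u) : (graph C).Adj u (par C hn u) :=
  (Or.inl (edgeDir_par C hn hu) : EdgeDir C _ _ ∨ EdgeDir C _ _)

lemma par_eq_vz_of_adj {u : Fin n} (hu : vz hn < u)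
    (h : (graph C).Adj u (vz hn)) : par C hn u = vz hn := by
  rcases (show EdgeDir C u (vz hn) ∨ EdgeDir C (vz hn) u from h) with h | h
  · obtain ⟨h1, c, hck, hc0, hmin⟩ := h
    exact par_eq_of_Q C hn hu ⟨h1, c, hck, hc0, hc0, hmin⟩
  · exact absurd h.1 (by simp [Fin.lt_def, vz])

lemma isRoutingStep_par {u : Fin n} (hu : vz hn < u) :
    IsRoutingStep C hn u (par C hn u) := by
  by_cases h : (graph C).Adj u (⟨0, hn⟩ : Fin n)
  · left
    exact ⟨h, par_eq_vz_of_adj C hn hu h⟩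
  · right
    obtain ⟨h1, c, hck, hc0, hcv, hmin⟩ := par_spec C hn hu
    refine ⟨h, adj_par C hn hu, h1, ⟨c, hck, hc0, hcv, hmin (vz hn) hu hc0⟩, ?_⟩
    intro w hadj hwu hcanon c' hck' hcpar hcw
    have : c' = c := cone_unique (kpos C) hck' hck hcpar hcv
    subst this
    exact hmin w hwu hcw

lemma cand_iff {u v : Fin n} :
    ExplCand C hn t u v ↔ (vz hn < v ∧ v ≤ t ∧ par C hn v = u) := by
  constructor
  · rintro ⟨hadj, huv, hvt, c, hck, hc0, hcu⟩
    have h0v : vz hn < v := lt_of_le_of_lt (vz_le hn u) huv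
    have hEd : EdgeDir C v u := by
      rcases (show EdgeDir C u v ∨ EdgeDir C v u from hadj) with h | h
      · exact absurd h.1 (asymm huv)
      · exact h
    obtain ⟨_, c'', hck'', hcone'', hmin''⟩ := hEd
    have : c'' = c := cone_unique (kpos C) hck'' hck hcone'' hcu
    subst this
    exact ⟨h0v, hvt, par_eq_of_Q C hn h0v ⟨huv, c'', hck'', hc0, hcone'', hmin''⟩⟩
  · rintro ⟨h0v, hvt, hpar⟩
    obtain ⟨h1, c, hck, hc0, hcv, hmin⟩ := par_spec C hn h0v
    rw [hpar] at h1 hcv hmin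
    exact ⟨(Or.inr ⟨h1, c, hck, hcv, hmin⟩ : EdgeDir C u v ∨ EdgeDir C v u), h1, hvt, c, hck, hc0, hcv⟩


/-- Strong induction principle for `Fin n`. -/
lemma finStrongRecOn {N : ℕ} {P : Fin N → Prop} (v : Fin N)
    (ind : ∀ v : Fin N, (∀ w : Fin N, w < v → P w) → P v) : P v := by
  have H : ∀ m : ℕ, ∀ v : Fin N, v.val ≤ m → P v := by
    intro m
    induction m with
    | zero =>
      intro v hv
      exact ind v (fun w hw => absurd (lt_of_lt_of_le (Fin.lt_def.mp hw) hv) (Nat.not_lt_zero _))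
    | succ m IH =>
      intro v hv
      exact ind v (fun w hw => IH w (by have := Fin.lt_def.mp hw; omega))
  exact H v.val v (le_refl _)

/-- The set of (weak) ancestors of `v` in the routing tree. -/
noncomputable def ancSet (v : Fin n) : Finset (Fin n) :=
  if h : vz hn < v then insert v (ancSet (par C hn v)) else {v}
termination_by v.val
decreasing_by exact par_lt C hn h

lemma ancSet_eq_pos {v : Fin n} (hv : vz hn < v) :
    ancSet C hn v = insert v (ancSet C hn (par C hn v)) := by
  conv_lhs => rw [ancSet]
  rw [dif_pos hv]

lemma mem_ancSet_self (v : Fin n) : v ∈ ancSet C hn v := by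
  rw [ancSet]
  split <;> simp

lemma mem_ancSet_le {w v : Fin n} (h : w ∈ ancSet C hn v) : w ≤ v := by
  induction v using finStrongRecOn with
  | ind v IH =>
    rw [ancSet] at h
    split at h
    · rename_i hv
      rcases Finset.mem_insert.mp h with h | h
      · exact le_of_eq h
      · exact le_of_lt (lt_of_le_of_lt (IH _ (par_lt C hn hv) h) (par_lt C hn hv))
    · simp at h
      exact le_of_eq h

lemma anc_trans {x w : Fin n} (h : x ∈ ancSet C hn w) :
    ancSet C hn x ⊆ ancSet C hn w := by
  induction w using finStrongRecOn with
  | ind w IH =>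
    rw [ancSet] at h
    split at h
    · rename_i hw
      rcases Finset.mem_insert.mp h with h | h
      · subst h
        exact subset_rfl
      · refine subset_trans (IH _ (par_lt C hn hw) h) ?_
        rw [ancSet_eq_pos C hn hw]
        exact Finset.subset_insert _ _
    · simp at h
      subst h
      exact subset_rfl

lemma vz_mem_ancSet (v : Fin n) : vz hn ∈ ancSet C hn v := by
  induction v using finStrongRecOn with
  | ind v IH =>
    rw [ancSet]
    split
    · rename_i hv
      exact Finset.mem_insert_of_mem (IH _ (par_lt C hn hv))
    · rename_i hv
      have : v = vz hn := le_antisymm (not_lt.mp hv) (vz_le hn v)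
      simp [this]

lemma mem_ancSet_step {u v : Fin n} (h : u ∈ ancSet C hn v) (hne : u ≠ v) :
    vz hn < v ∧ u ∈ ancSet C hn (par C hn v) := by
  rw [ancSet] at h
  split at h
  · rename_i hv
    rcases Finset.mem_insert.mp h with h | h
    · exact absurd h hne
    · exact ⟨hv, h⟩
  · simp at h
    exact absurd h hne

lemma anc_total {x y v : Fin n} (hx : x ∈ ancSet C hn v) (hy : y ∈ ancSet C hn v) :
    x ∈ ancSet C hn y ∨ y ∈ ancSet C hn x := by
  induction v using finStrongRecOn with
  | ind v IH =>
    rcases eq_or_ne x v with rfl | hxv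
    · right
      exact hy
    · rcases eq_or_ne y v with rfl | hyv
      · left
        exact hx
      · obtain ⟨hv, hx'⟩ := mem_ancSet_step C hn hx hxv
        obtain ⟨_, hy'⟩ := mem_ancSet_step C hn hy hyv
        exact IH _ (par_lt C hn hv) hx' hy'

lemma spine_child {u w : Fin n} (h : u ∈ ancSet C hn w) (hne : u ≠ w) :
    ∃ x, x ∈ ancSet C hn w ∧ vz hn < x ∧ par C hn x = u := by
  induction w using finStrongRecOn with
  | ind w IH =>
    obtain ⟨hw, h'⟩ := mem_ancSet_step C hn h hne
    rcases eq_or_ne u (par C hn w) with rfl | hne'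
    · exact ⟨w, mem_ancSet_self C hn w, hw, rfl⟩
    · obtain ⟨x, hx1, hx2, hx3⟩ := IH _ (par_lt C hn hw) h' hne'
      refine ⟨x, ?_, hx2, hx3⟩
      rw [ancSet_eq_pos C hn hw]
      exact Finset.mem_insert_of_mem hx1

lemma par_mem_ancSet {x : Fin n} (hx : vz hn < x) : par C hn x ∈ ancSet C hn x := by
  rw [ancSet_eq_pos C hn hx]
  exact Finset.mem_insert_of_mem (mem_ancSet_self C hn _)

/-- The descendants of `u` in the routing tree. -/
noncomputable def desc (u : Fin n) : Finset (Fin n) :=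
  Finset.univ.filter (fun w => u ∈ ancSet C hn w)

lemma mem_desc {u w : Fin n} : w ∈ desc C hn u ↔ u ∈ ancSet C hn w := by
  simp [desc]

lemma self_mem_desc (u : Fin n) : u ∈ desc C hn u :=
  (mem_desc C hn).mpr (mem_ancSet_self C hn u)

lemma desc_card_pos (u : Fin n) : 0 < (desc C hn u).card :=
  Finset.card_pos.mpr ⟨u, self_mem_desc C hn u⟩

lemma desc_le {u w : Fin n} (h : w ∈ desc C hn u) : u ≤ w :=
  mem_ancSet_le C hn ((mem_desc C hn).mp h)

lemma desc_mono {u x : Fin n} (h : u ∈ ancSet C hn x) : desc C hn x ⊆ desc C hn u := by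
  intro w hw
  exact (mem_desc C hn).mpr (anc_trans C hn ((mem_desc C hn).mp hw) h)

lemma desc_child {x : Fin n} (hx : vz hn < x) :
    desc C hn x ⊆ desc C hn (par C hn x) :=
  desc_mono C hn (par_mem_ancSet C hn hx)

lemma desc_child_sub {x : Fin n} (hx : vz hn < x) :
    desc C hn x ⊆ desc C hn (par C hn x) \ {par C hn x} := by
  intro w hw
  rw [Finset.mem_sdiff, Finset.mem_singleton]
  refine ⟨desc_child C hn hx hw, ?_⟩
  have h1 : par C hn x < x := par_lt C hn hx
  have h2 : x ≤ w := desc_le C hn hw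
  intro h
  rw [h] at h2
  exact absurd (lt_of_lt_of_le h1 h2) (lt_irrefl _)

lemma desc_disjoint {x y : Fin n} (hx : vz hn < x) (hy : vz hn < y)
    (hpar : par C hn x = par C hn y) (hne : x ≠ y) :
    Disjoint (desc C hn x) (desc C hn y) := by
  rw [Finset.disjoint_left]
  intro w hwx hwy
  have hxw := (mem_desc C hn).mp hwx
  have hyw := (mem_desc C hn).mp hwy
  have key : ∀ a b : Fin n, vz hn < a → vz hn < b → par C hn a = par C hn b →
      a ≠ b → a ∈ ancSet C hn b → False := by
    intro a b ha hb hp hab hmem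
    obtain ⟨_, hmem'⟩ := mem_ancSet_step C hn hmem hab
    have : a ≤ par C hn b := mem_ancSet_le C hn hmem'
    rw [← hp] at this
    exact absurd (lt_of_le_of_lt this (par_lt C hn ha)) (lt_irrefl a)
  rcases anc_total C hn hxw hyw with h | h
  · exact key x y hx hy hpar hne h
  · exact key y x hy hx hpar.symm hne.symm h

/-- The children of `u` in the exploration space (bounded by `t`). -/
noncomputable def children (u : Fin n) : Finset (Fin n) :=
  Finset.univ.filter (fun v => vz hn < v ∧ v ≤ t ∧ par C hn v = u)

lemma mem_children {u v : Fin n} :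
    v ∈ children C hn t u ↔ (vz hn < v ∧ v ≤ t ∧ par C hn v = u) := by
  simp [children]

lemma cand_iff_children {u v : Fin n} :
    ExplCand C hn t u v ↔ v ∈ children C hn t u := by
  rw [cand_iff, mem_children]

/-- The alpha values of the children of `u`. -/
noncomputable def AS (u : Fin n) : Finset ℝ :=
  (children C hn t u).image (fun v => alpha (C.V u) (C.V v))

open Classical in
/-- A canonical representative child with a given alpha value. -/
noncomputable def repC (u : Fin n) (a : ℝ) : Fin n :=
  if h : ((children C hn t u).filter (fun v => alpha (C.V u) (C.V v) = a)).Nonempty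
  then ((children C hn t u).filter (fun v => alpha (C.V u) (C.V v) = a)).min' h else u

lemma repC_spec {u : Fin n} {a : ℝ} (ha : a ∈ AS C hn t u) :
    repC C hn t u a ∈ children C hn t u ∧ alpha (C.V u) (C.V (repC C hn t u a)) = a := by
  classical
  obtain ⟨v, hv, hva⟩ := Finset.mem_image.mp ha
  have hne : ((children C hn t u).filter (fun v => alpha (C.V u) (C.V v) = a)).Nonempty :=
    ⟨v, Finset.mem_filter.mpr ⟨hv, hva⟩⟩
  rw [repC, dif_pos hne]
  have := Finset.min'_mem _ hne
  rw [Finset.mem_filter] at this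
  exact this

lemma alpha_mem_AS {u v : Fin n} (hv : v ∈ children C hn t u) :
    alpha (C.V u) (C.V v) ∈ AS C hn t u :=
  Finset.mem_image_of_mem _ hv


/-! #### Step constructors for `AupStep` -/

lemma aupExplore1 {u v : Fin n} {p : Option (Fin n)} (hut : u ≠ t)
    (hv : ExplCand C hn t u v)
    (hmin : ∀ v' : Fin n, ExplCand C hn t u v' →
      alpha (C.V u) (C.V v) ≤ alpha (C.V u) (C.V v')) :
    AupStep C hn t (u, p, true) (v, some u, true) :=
  ⟨hut, Or.inl ⟨rfl, Or.inl ⟨v, hv, hmin, rfl⟩⟩⟩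

lemma aupRoute1 {u : Fin n} {p : Option (Fin n)} (hut : u ≠ t) (hu : vz hn < u)
    (hnc : ¬ ∃ v, ExplCand C hn t u v) :
    AupStep C hn t (u, p, true) (par C hn u, some u, false) :=
  ⟨hut, Or.inl ⟨rfl, Or.inr ⟨hnc, par C hn u, isRoutingStep_par C hn hu, rfl⟩⟩⟩

lemma aupExplore0 {u q v : Fin n} (hut : u ≠ t)
    (hv : ExplCand C hn t u v)
    (hlt : alpha (C.V u) (C.V q) < alpha (C.V u) (C.V v))
    (hmin : ∀ v' : Fin n, ExplCand C hn t u v' →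
      alpha (C.V u) (C.V q) < alpha (C.V u) (C.V v') →
      alpha (C.V u) (C.V v) ≤ alpha (C.V u) (C.V v')) :
    AupStep C hn t (u, some q, false) (v, some u, true) :=
  ⟨hut, Or.inr ⟨rfl, q, rfl, Or.inl ⟨v, ⟨hv, hlt⟩, hmin, rfl⟩⟩⟩

lemma aupRoute0 {u q : Fin n} (hut : u ≠ t) (hu : vz hn < u)
    (hnc : ¬ ∃ v, ExplCand C hn t u v ∧
      alpha (C.V u) (C.V q) < alpha (C.V u) (C.V v)) :
    AupStep C hn t (u, some q, false) (par C hn u, some u, false) :=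
  ⟨hut, Or.inr ⟨rfl, q, rfl, Or.inr ⟨hnc, par C hn u, isRoutingStep_par C hn hu, rfl⟩⟩⟩

/-! #### Statements for the tree traversal -/

/-- Full exploration of the subtree of `u`, ending ready to route back to the
parent of `u`. -/
def TOURstmt (u : Fin n) : Prop :=
  vz hn < u → u ≤ t → t ∉ desc C hn u →
  ∀ p : Fin n, ∃ L : List (Fin n × Option (Fin n) × Bool),
    L ≠ [] ∧
    L.head? = some (u, some p, true) ∧
    List.Chain' (AupStep C hn t) L ∧
    (∀ s ∈ L, s.1 ∈ desc C hn u) ∧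
    (∀ x ∈ L.getLast?, AupStep C hn t x (par C hn u, some u, false)) ∧
    L.length < 2 * (desc C hn u).card

/-- Partial exploration reaching `t` inside the subtree of `u`. -/
def REACHstmt (u : Fin n) : Prop :=
  u ∈ ancSet C hn t →
  ∀ p : Option (Fin n), ∃ L : List (Fin n × Option (Fin n) × Bool),
    L ≠ [] ∧
    L.head? = some (u, p, true) ∧
    List.Chain' (AupStep C hn t) L ∧
    (∀ x ∈ L.getLast?, x.1 = t) ∧
    L.length < 2 * (desc C hn u).card


/-! #### List helpers -/

lemma head?_append_of {α : Type*} {l l' : List α} {a : α} (h : l.head? = some a) :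
    (l ++ l').head? = some a := by
  cases l with
  | nil => simp at h
  | cons y ys => simpa using h

lemma getLast?_append_cons {α : Type*} (l : List α) (x : α) (l' : List α) :
    (l ++ x :: l').getLast? = (x :: l').getLast? := by
  rw [List.getLast?_append]
  cases h : (x :: l').getLast? with
  | none => simp at h
  | some a => rfl

lemma getLast?_cons_of_ne_nil {α : Type*} {l : List α} (x : α) (h : l ≠ []) :
    (x :: l).getLast? = l.getLast? := by
  cases l with
  | nil => exact absurd rfl h
  | cons y ys => simp [List.getLast?_cons_cons]

/-! #### Processing an upward-closed set of alpha classes -/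

lemma PROC (u : Fin n) (hut : u ≠ t)
    (IH : ∀ x : Fin n, u < x → TOURstmt C hn t x) :
    ∀ B : Finset ℝ, B ⊆ AS C hn t u →
    (∀ a ∈ AS C hn t u, ∀ b ∈ B, b ≤ a → a ∈ B) →
    ∀ (hBne : B.Nonempty),
    (∀ a ∈ B, t ∉ desc C hn (repC C hn t u a)) →
    ∃ L : List (Fin n × Option (Fin n) × Bool),
      L ≠ [] ∧
      L.head? = some (repC C hn t u (B.min' hBne), some u, true) ∧
      List.Chain' (AupStep C hn t) L ∧
      (∃ q : Fin n,
        L.getLast? = some (u, some q, false) ∧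
        ∀ v : Fin n, ExplCand C hn t u v →
          alpha (C.V u) (C.V v) ≤ alpha (C.V u) (C.V q)) ∧
      (∀ s ∈ L, s.1 = u ∨ s.1 ∈ B.biUnion (fun a => desc C hn (repC C hn t u a))) ∧
      L.length ≤ 2 * (B.biUnion (fun a => desc C hn (repC C hn t u a))).card := by
  classical
  intro B
  induction B using Finset.strongInductionOn with
  | _ B IHB =>
  intro hBA hup hBne hT
  set m := B.min' hBne with hm
  have hmB : m ∈ B := B.min'_mem hBne
  have hmA : m ∈ AS C hn t u := hBA hmB
  obtain ⟨hrC, hrα⟩ := repC_spec C hn t hmA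
  set r := repC C hn t u m with hrdef
  rw [mem_children] at hrC
  obtain ⟨hr0, hrt, hrpar⟩ := hrC
  have hur : u < r := by rw [← hrpar]; exact par_lt C hn hr0
  obtain ⟨Lt, LtNe, LtHead, LtChain, LtDesc, LtLast, LtLen⟩ :=
    IH r hur hr0 hrt (hT m hmB) u
  have LtLast' : ∀ x ∈ Lt.getLast?, AupStep C hn t x (u, some r, false) := by
    intro x hx
    have := LtLast x hx
    rwa [hrpar] at this
  have hcard1 : (desc C hn r).card ≤
      (B.biUnion (fun a => desc C hn (repC C hn t u a))).card := by
    exact Finset.card_le_card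
      (Finset.subset_biUnion_of_mem (fun a => desc C hn (repC C hn t u a)) hmB)
  have hmemLt : ∀ s ∈ Lt, s.1 = u ∨
      s.1 ∈ B.biUnion (fun a => desc C hn (repC C hn t u a)) := by
    intro s hs
    exact Or.inr (Finset.mem_biUnion.mpr ⟨m, hmB, LtDesc s hs⟩)
  by_cases hB' : (B.erase m).Nonempty
  · -- more classes remain
    have hss : B.erase m ⊂ B := Finset.erase_ssubset hmB
    have hup' : ∀ a ∈ AS C hn t u, ∀ b ∈ B.erase m, b ≤ a → a ∈ B.erase m := by
      intro a haA b hb hba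
      obtain ⟨hbm, hbB⟩ := Finset.mem_erase.mp hb
      have hmb : m < b := lt_of_le_of_ne (Finset.min'_le _ _ hbB) (Ne.symm hbm)
      refine Finset.mem_erase.mpr ⟨?_, hup a haA m hmB (le_of_lt (lt_of_lt_of_le hmb hba))⟩
      intro h
      rw [h] at hba
      exact absurd (lt_of_lt_of_le hmb hba) (lt_irrefl m)
    obtain ⟨L', L'Ne, L'Head, L'Chain, ⟨q, L'qLast, L'qMax⟩, L'Mem, L'Len⟩ :=
      IHB (B.erase m) hss (subset_trans (Finset.erase_subset _ _) hBA) hup' hB'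
        (fun a ha => hT a (Finset.mem_of_mem_erase ha))
    set m' := (B.erase m).min' hB' with hm'
    have hm'B' : m' ∈ B.erase m := Finset.min'_mem _ _
    have hm'B : m' ∈ B := Finset.mem_of_mem_erase hm'B'
    have hmm' : m < m' :=
      lt_of_le_of_ne (Finset.min'_le _ _ hm'B) (Ne.symm (Finset.mem_erase.mp hm'B').1)
    obtain ⟨hr'C, hr'α⟩ := repC_spec C hn t (hBA hm'B)
    have glue2 : AupStep C hn t (u, some r, false) (repC C hn t u m', some u, true) := by
      refine aupExplore0 C hn t hut ((cand_iff_children C hn t).mpr hr'C) ?_ ?_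
      · rw [hrα, hr'α]
        exact hmm'
      · intro v' hv' hgt
        rw [hrα] at hgt
        have hvA : alpha (C.V u) (C.V v') ∈ AS C hn t u :=
          alpha_mem_AS C hn t ((cand_iff_children C hn t).mp hv')
        have hvB : alpha (C.V u) (C.V v') ∈ B := hup _ hvA m hmB (le_of_lt hgt)
        have hvB' : alpha (C.V u) (C.V v') ∈ B.erase m :=
          Finset.mem_erase.mpr ⟨fun h => absurd (h ▸ hgt) (lt_irrefl m), hvB⟩
        rw [hr'α]
        exact Finset.min'_le _ _ hvB'
    refine ⟨Lt ++ (u, some r, false) :: L', by simp, head?_append_of LtHead, ?_, ?_, ?_, ?_⟩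
    · refine LtChain.append ?_ ?_
      · apply List.isChain_cons.mpr
        refine ⟨?_, L'Chain⟩
        intro y hy
        rw [L'Head] at hy
        cases hy
        exact glue2
      · intro x hx y hy
        simp only [List.head?_cons, Option.mem_def, Option.some.injEq] at hy
        subst hy
        exact LtLast' x hx
    · refine ⟨q, ?_, L'qMax⟩
      rw [getLast?_append_cons, getLast?_cons_of_ne_nil _ L'Ne]
      exact L'qLast
    · intro s hs
      rcases List.mem_append.mp hs with h | h
      · exact hmemLt s h
      · rcases List.mem_cons.mp h with h | h
        · subst h
          exact Or.inl rfl
        · rcases L'Mem s h with h' | h'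
          · exact Or.inl h'
          · refine Or.inr ?_
            obtain ⟨a, ha, ha'⟩ := Finset.mem_biUnion.mp h'
            exact Finset.mem_biUnion.mpr ⟨a, Finset.mem_of_mem_erase ha, ha'⟩
    · have hdisj : Disjoint (desc C hn r)
          ((B.erase m).biUnion (fun a => desc C hn (repC C hn t u a))) := by
        rw [Finset.disjoint_biUnion_right]
        intro a ha
        have haA : a ∈ AS C hn t u := hBA (Finset.mem_of_mem_erase ha)
        obtain ⟨haC, haα⟩ := repC_spec C hn t haA
        rw [mem_children] at haC
        refine desc_disjoint C hn hr0 haC.1 (by rw [hrpar, haC.2.2]) ?_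
        intro h
        rw [← h, hrα] at haα
        exact (Finset.mem_erase.mp ha).1 haα.symm
      have hsplit : B.biUnion (fun a => desc C hn (repC C hn t u a))
          = desc C hn r ∪ (B.erase m).biUnion (fun a => desc C hn (repC C hn t u a)) := by
        conv_lhs => rw [← Finset.insert_erase hmB]
        rw [Finset.biUnion_insert]
      rw [List.length_append, List.length_cons, hsplit,
        Finset.card_union_of_disjoint hdisj]
      omega
  · -- this was the last class: `B = {m}`
    have hBsing : ∀ b ∈ B, b = m := by
      intro b hb
      by_contra hne
      exact hB' ⟨b, Finset.mem_erase.mpr ⟨hne, hb⟩⟩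
    refine ⟨Lt ++ [(u, some r, false)], by simp, head?_append_of LtHead, ?_, ⟨r, by simp, ?_⟩, ?_, ?_⟩
    · exact LtChain.append (List.isChain_singleton _)
        (fun x hx y hy => by
          simp only [List.head?_cons, Option.mem_def, Option.some.injEq] at hy
          subst hy
          exact LtLast' x hx)
    · intro v hv
      have hvA : alpha (C.V u) (C.V v) ∈ AS C hn t u :=
        alpha_mem_AS C hn t ((cand_iff_children C hn t).mp hv)
      rw [hrα]
      by_contra hle
      push_neg at hle
      have : alpha (C.V u) (C.V v) ∈ B := hup _ hvA m hmB (le_of_lt hle)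
      exact absurd (hBsing _ this) (ne_of_gt hle)
    · intro s hs
      rcases List.mem_append.mp hs with h | h
      · exact hmemLt s h
      · simp only [List.mem_singleton] at h
        subst h
        exact Or.inl rfl
    · rw [List.length_append, List.length_cons, List.length_nil]
      omega


lemma biUnion_desc_sub {u : Fin n} {B : Finset ℝ} (hBA : B ⊆ AS C hn t u) :
    B.biUnion (fun a => desc C hn (repC C hn t u a)) ⊆ desc C hn u \ {u} := by
  classical
  intro w hw
  obtain ⟨a, ha, hw'⟩ := Finset.mem_biUnion.mp hw
  obtain ⟨haC, _⟩ := repC_spec C hn t (hBA ha)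
  rw [mem_children] at haC
  have := desc_child_sub C hn haC.1 hw'
  rwa [haC.2.2] at this

lemma card_sdiff_self (u : Fin n) :
    (desc C hn u \ {u}).card = (desc C hn u).card - 1 := by
  rw [Finset.card_sdiff_of_subset (Finset.singleton_subset_iff.mpr (self_mem_desc C hn u))]
  simp

lemma TOURmain (u : Fin n) (IH : ∀ x : Fin n, u < x → TOURstmt C hn t x) :
    TOURstmt C hn t u := by
  classical
  intro hu0 hut htd p
  have hunt : u ≠ t := fun h => htd (h ▸ self_mem_desc C hn u)
  by_cases hA : (AS C hn t u).Nonempty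
  · have hT : ∀ a ∈ AS C hn t u, t ∉ desc C hn (repC C hn t u a) := by
      intro a ha hcon
      obtain ⟨haC, _⟩ := repC_spec C hn t ha
      rw [mem_children] at haC
      have := desc_child C hn haC.1 hcon
      rw [haC.2.2] at this
      exact htd this
    obtain ⟨L, LNe, LHead, LChain, ⟨q, LqLast, LqMax⟩, LMem, LLen⟩ :=
      PROC C hn t u hunt IH (AS C hn t u) subset_rfl (fun a ha _ _ _ => ha) hA hT
    have hminA : (AS C hn t u).min' hA ∈ AS C hn t u := Finset.min'_mem _ _
    obtain ⟨hmC, hmα⟩ := repC_spec C hn t hminA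
    refine ⟨(u, some p, true) :: L, by simp, by simp, ?_, ?_, ?_, ?_⟩
    · apply List.isChain_cons.mpr
      refine ⟨?_, LChain⟩
      intro y hy
      rw [LHead] at hy
      cases hy
      refine aupExplore1 C hn t hunt ((cand_iff_children C hn t).mpr hmC) ?_
      intro v' hv'
      rw [hmα]
      exact Finset.min'_le _ _ (alpha_mem_AS C hn t ((cand_iff_children C hn t).mp hv'))
    · intro s hs
      rcases List.mem_cons.mp hs with h | h
      · subst h
        exact self_mem_desc C hn u
      · rcases LMem s h with h' | h'
        · rw [h']
          exact self_mem_desc C hn u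
        · exact (Finset.mem_sdiff.mp (biUnion_desc_sub C hn t subset_rfl h')).1
    · intro y hy
      rw [getLast?_cons_of_ne_nil _ LNe, LqLast] at hy
      cases hy
      refine aupRoute0 C hn t hunt hu0 ?_
      rintro ⟨v, hv, hlt⟩
      exact absurd (LqMax v hv) (not_le.mpr hlt)
    · have h1 : ((AS C hn t u).biUnion (fun a => desc C hn (repC C hn t u a))).card
          ≤ (desc C hn u).card - 1 := by
        rw [← card_sdiff_self C hn u]
        exact Finset.card_le_card (biUnion_desc_sub C hn t subset_rfl)
      have h2 := desc_card_pos C hn u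
      simp only [List.length_cons]
      omega
  · refine ⟨[(u, some p, true)], by simp, by simp, List.isChain_singleton _, ?_, ?_, ?_⟩
    · intro s hs
      simp only [List.mem_singleton] at hs
      subst hs
      exact self_mem_desc C hn u
    · intro y hy
      simp only [List.getLast?_singleton, Option.mem_def, Option.some.injEq] at hy
      subst hy
      refine aupRoute1 C hn t hunt hu0 ?_
      rintro ⟨v, hv⟩
      exact hA ⟨_, alpha_mem_AS C hn t ((cand_iff_children C hn t).mp hv)⟩
    · have := desc_card_pos C hn u
      simp only [List.length_singleton]
      omega


lemma REACHmain (u : Fin n)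
    (IHT : ∀ x : Fin n, u < x → TOURstmt C hn t x)
    (IHR : ∀ x : Fin n, u < x → REACHstmt C hn t x) :
    REACHstmt C hn t u := by
  classical
  intro hanc p
  rcases eq_or_ne u t with rfl | hunt
  · refine ⟨[(u, p, true)], by simp, by simp, List.isChain_singleton _, ?_, ?_⟩
    · intro y hy
      simp only [List.getLast?_singleton, Option.mem_def, Option.some.injEq] at hy
      subst hy
      rfl
    · have := desc_card_pos C hn u
      simp only [List.length_singleton]
      omega
  · obtain ⟨x, hxanc, hx0, hxpar⟩ := spine_child C hn hanc hunt
    have hxt : x ≤ t := mem_ancSet_le C hn hxanc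
    have hxchild : x ∈ children C hn t u := (mem_children C hn t).mpr ⟨hx0, hxt, hxpar⟩
    have hux : u < x := by rw [← hxpar]; exact par_lt C hn hx0
    have htdx : t ∈ desc C hn x := (mem_desc C hn).mpr hxanc
    have haxA : alpha (C.V u) (C.V x) ∈ AS C hn t u := alpha_mem_AS C hn t hxchild
    have claim : ∀ B : Finset ℝ, B ⊆ AS C hn t u →
        (∀ a ∈ AS C hn t u, ∀ b ∈ B, b ≤ a → a ∈ B) →
        alpha (C.V u) (C.V x) ∈ B →
        ∃ L : List (Fin n × Option (Fin n) × Bool), ∃ v1 : Fin n,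
          L ≠ [] ∧
          L.head? = some (v1, some u, true) ∧
          ExplCand C hn t u v1 ∧
          alpha (C.V u) (C.V v1) ∈ B ∧
          (∀ v' : Fin n, ExplCand C hn t u v' → alpha (C.V u) (C.V v') ∈ B →
            alpha (C.V u) (C.V v1) ≤ alpha (C.V u) (C.V v')) ∧
          List.Chain' (AupStep C hn t) L ∧
          (∀ y ∈ L.getLast?, y.1 = t) ∧
          L.length + 1 ≤
            2 * ((B.filter (fun a => a < alpha (C.V u) (C.V x))).biUnion
                  (fun a => desc C hn (repC C hn t u a))).card
            + 2 * (desc C hn x).card := by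
      intro B
      induction B using Finset.strongInductionOn with
      | _ B IHB =>
      intro hBA hup haxB
      have hBne : B.Nonempty := ⟨_, haxB⟩
      set m := B.min' hBne with hm
      have hmB : m ∈ B := Finset.min'_mem _ _
      rcases eq_or_ne m (alpha (C.V u) (C.V x)) with hmx | hmx
      · -- the class of `x` is next: explore `x` and recurse into it
        obtain ⟨L, LNe, LHead, LChain, LLast, LLen⟩ := IHR x hux hxanc (some u)
        refine ⟨L, x, LNe, LHead, (cand_iff_children C hn t).mpr hxchild,
          hmx ▸ hmB, ?_, LChain, LLast, ?_⟩
        · intro v' _ hv'B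
          have h := Finset.min'_le B _ hv'B
          rw [← hm, hmx] at h
          exact h
        · omega
      · -- a smaller class comes first: tour it and continue
        have hmlt : m < alpha (C.V u) (C.V x) :=
          lt_of_le_of_ne (Finset.min'_le _ _ haxB) hmx
        have hmA : m ∈ AS C hn t u := hBA hmB
        obtain ⟨hrC, hrα⟩ := repC_spec C hn t hmA
        set r := repC C hn t u m with hrdef
        rw [mem_children] at hrC
        obtain ⟨hr0, hrt, hrpar⟩ := hrC
        have hur : u < r := by rw [← hrpar]; exact par_lt C hn hr0
        have hrx : r ≠ x := fun h => hmx (by rw [← hrα, h])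
        have htdr : t ∉ desc C hn r := fun hcon =>
          Finset.disjoint_left.mp
            (desc_disjoint C hn hr0 hx0 (hrpar.trans hxpar.symm) hrx) hcon htdx
        obtain ⟨Lt, LtNe, LtHead, LtChain, LtDesc, LtLast, LtLen⟩ :=
          IHT r hur hr0 hrt htdr u
        have LtLast' : ∀ y ∈ Lt.getLast?, AupStep C hn t y (u, some r, false) := by
          intro y hy
          have := LtLast y hy
          rwa [hrpar] at this
        have hB'ss : B.erase m ⊂ B := Finset.erase_ssubset hmB
        have haxB' : alpha (C.V u) (C.V x) ∈ B.erase m :=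
          Finset.mem_erase.mpr ⟨Ne.symm hmx, haxB⟩
        have hup' : ∀ a ∈ AS C hn t u, ∀ b ∈ B.erase m, b ≤ a → a ∈ B.erase m := by
          intro a haA b hb hba
          obtain ⟨hbm, hbB⟩ := Finset.mem_erase.mp hb
          have hmb : m < b := lt_of_le_of_ne (Finset.min'_le _ _ hbB) (Ne.symm hbm)
          refine Finset.mem_erase.mpr ⟨?_, hup a haA m hmB (le_of_lt (lt_of_lt_of_le hmb hba))⟩
          intro h
          rw [h] at hba
          exact absurd (lt_of_lt_of_le hmb hba) (lt_irrefl m)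
        obtain ⟨L', v1', L'Ne, L'Head, hv1'C, hv1'B, hv1'min, L'Chain, L'Last, L'Len⟩ :=
          IHB _ hB'ss (subset_trans (Finset.erase_subset _ _) hBA) hup' haxB'
        have hmv1' : m < alpha (C.V u) (C.V v1') :=
          lt_of_le_of_ne (Finset.min'_le _ _ (Finset.mem_of_mem_erase hv1'B))
            (Ne.symm (Finset.mem_erase.mp hv1'B).1)
        have glue2 : AupStep C hn t (u, some r, false) (v1', some u, true) := by
          refine aupExplore0 C hn t hunt hv1'C (by rw [hrα]; exact hmv1') ?_
          intro v' hv' hgt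
          rw [hrα] at hgt
          have hvA : alpha (C.V u) (C.V v') ∈ AS C hn t u :=
            alpha_mem_AS C hn t ((cand_iff_children C hn t).mp hv')
          have hvB : alpha (C.V u) (C.V v') ∈ B := hup _ hvA m hmB (le_of_lt hgt)
          have hvB' : alpha (C.V u) (C.V v') ∈ B.erase m :=
            Finset.mem_erase.mpr ⟨fun h => absurd (h ▸ hgt) (lt_irrefl m), hvB⟩
          exact hv1'min v' hv' hvB'
        refine ⟨Lt ++ (u, some r, false) :: L', r, by simp, head?_append_of LtHead,
          (cand_iff_children C hn t).mpr ((mem_children C hn t).mpr ⟨hr0, hrt, hrpar⟩),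
          hrα ▸ hmB, ?_, ?_, ?_, ?_⟩
        · intro v' _ hv'B
          have h := Finset.min'_le B _ hv'B
          rw [← hm] at h
          rw [hrα]
          exact h
        · refine LtChain.append ?_ ?_
          · apply List.isChain_cons.mpr
            refine ⟨?_, L'Chain⟩
            intro y hy
            rw [L'Head] at hy
            cases hy
            exact glue2
          · intro y hy z hz
            simp only [List.head?_cons, Option.mem_def, Option.some.injEq] at hz
            subst hz
            exact LtLast' y hy
        · intro y hy
          rw [getLast?_append_cons, getLast?_cons_of_ne_nil _ L'Ne] at hy
          exact L'Last y hy
        · have hfil : (B.erase m).filter (fun a => a < alpha (C.V u) (C.V x))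
              = (B.filter (fun a => a < alpha (C.V u) (C.V x))).erase m :=
            Finset.filter_erase _ _ _
          have hmfil : m ∈ B.filter (fun a => a < alpha (C.V u) (C.V x)) :=
            Finset.mem_filter.mpr ⟨hmB, hmlt⟩
          have hdisj : Disjoint (desc C hn r)
              (((B.filter (fun a => a < alpha (C.V u) (C.V x))).erase m).biUnion
                (fun a => desc C hn (repC C hn t u a))) := by
            rw [Finset.disjoint_biUnion_right]
            intro a ha
            have haA : a ∈ AS C hn t u := hBA (Finset.mem_of_mem_erase
              ((Finset.erase_subset_erase _ (Finset.filter_subset _ _)) ha))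
            obtain ⟨haC, haα⟩ := repC_spec C hn t haA
            rw [mem_children] at haC
            refine desc_disjoint C hn hr0 haC.1 (by rw [hrpar, haC.2.2]) ?_
            intro h
            rw [← h, hrα] at haα
            exact (Finset.mem_erase.mp ha).1 haα.symm
          have hsplit : (B.filter (fun a => a < alpha (C.V u) (C.V x))).biUnion
                (fun a => desc C hn (repC C hn t u a))
              = desc C hn r ∪
                ((B.filter (fun a => a < alpha (C.V u) (C.V x))).erase m).biUnion
                  (fun a => desc C hn (repC C hn t u a)) := by
            conv_lhs => rw [← Finset.insert_erase hmfil]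
            rw [Finset.biUnion_insert]
          rw [hfil] at L'Len
          rw [List.length_append, List.length_cons, hsplit,
            Finset.card_union_of_disjoint hdisj]
          omega
    obtain ⟨L, v1, LNe, LHead, hv1C, _, hv1min, LChain, LLast, LLen⟩ :=
      claim (AS C hn t u) subset_rfl (fun a ha _ _ _ => ha) haxA
    refine ⟨(u, p, true) :: L, by simp, by simp, ?_, ?_, ?_⟩
    · apply List.isChain_cons.mpr
      refine ⟨?_, LChain⟩
      intro y hy
      rw [LHead] at hy
      cases hy
      exact aupExplore1 C hn t hunt hv1C
        (fun v' hv' => hv1min v' hv'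
          (alpha_mem_AS C hn t ((cand_iff_children C hn t).mp hv')))
    · intro y hy
      rw [getLast?_cons_of_ne_nil _ LNe] at hy
      exact LLast y hy
    · have hsub1 : ((AS C hn t u).filter
            (fun a => a < alpha (C.V u) (C.V x))).biUnion
            (fun a => desc C hn (repC C hn t u a)) ⊆ desc C hn u \ {u} :=
        biUnion_desc_sub C hn t (Finset.filter_subset _ _)
      have hsub2 : desc C hn x ⊆ desc C hn u \ {u} := by
        have := desc_child_sub C hn hx0
        rwa [hxpar] at this
      have hdisj : Disjoint (((AS C hn t u).filter
            (fun a => a < alpha (C.V u) (C.V x))).biUnion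
            (fun a => desc C hn (repC C hn t u a))) (desc C hn x) := by
        rw [Finset.disjoint_biUnion_left]
        intro a ha
        rw [Finset.mem_filter] at ha
        obtain ⟨haC, haα⟩ := repC_spec C hn t ha.1
        rw [mem_children] at haC
        refine desc_disjoint C hn haC.1 hx0 (by rw [haC.2.2, hxpar]) ?_
        intro h
        rw [h] at haα
        exact absurd haα.symm (ne_of_lt ha.2)
      have hcard : (((AS C hn t u).filter
            (fun a => a < alpha (C.V u) (C.V x))).biUnion
            (fun a => desc C hn (repC C hn t u a))).card + (desc C hn x).card
          ≤ (desc C hn u).card - 1 := by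
        rw [← Finset.card_union_of_disjoint hdisj, ← card_sdiff_self C hn u]
        exact Finset.card_le_card (Finset.union_subset hsub1 hsub2)
      have := desc_card_pos C hn u
      simp only [List.length_cons]
      omega


lemma master : ∀ N : ℕ, ∀ u : Fin n, n - u.val ≤ N →
    TOURstmt C hn t u ∧ REACHstmt C hn t u := by
  intro N
  induction N with
  | zero =>
    intro u hu
    have := u.isLt
    omega
  | succ N IH =>
    intro u hu
    have IH' : ∀ x : Fin n, u < x → TOURstmt C hn t x ∧ REACHstmt C hn t x := by
      intro x hx
      refine IH x ?_
      have h1 := x.isLt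
      have h2 := Fin.lt_def.mp hx
      omega
    exact ⟨TOURmain C hn t u (fun x hx => (IH' x hx).1),
           REACHmain C hn t u (fun x hx => (IH' x hx).1) (fun x hx => (IH' x hx).2)⟩

lemma reach_all (u : Fin n) : REACHstmt C hn t u :=
  (master C hn t n u (by omega)).2

/-! #### The descending phase -/

open Classical in
noncomputable def nbrsBelow (u : Fin n) : Finset (Fin n) :=
  Finset.univ.filter (fun v => (graph C).Adj u v ∧ v < u)

lemma nbrsBelow_nonempty {u : Fin n} (hu : vz hn < u) : (nbrsBelow C u).Nonempty := by
  classical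
  exact ⟨par C hn u, by simp [nbrsBelow, adj_par C hn hu, par_lt C hn hu]⟩

open Classical in
noncomputable def dstep (u : Fin n) : Fin n :=
  if h : vz hn < u then (nbrsBelow C u).min' (nbrsBelow_nonempty C hn h) else u

lemma dstep_spec {u : Fin n} (hu : vz hn < u) :
    AdownStep C u (dstep C hn u) ∧ dstep C hn u < u := by
  classical
  rw [dstep, dif_pos hu]
  have hmem := (nbrsBelow C u).min'_mem (nbrsBelow_nonempty C hn hu)
  simp only [nbrsBelow, Finset.mem_filter, Finset.mem_univ, true_and] at hmem
  refine ⟨⟨hmem.1, hmem.2, ?_⟩, hmem.2⟩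
  intro v' hadj hlt
  exact Finset.min'_le _ _ (by simp [nbrsBelow, hadj, hlt])

lemma descent : ∀ u : Fin n, ∃ m ≤ u.val,
    (dstep C hn)^[m] u = vz hn ∧ ∀ j < m, (dstep C hn)^[j] u ≠ vz hn := by
  intro u
  induction u using finStrongRecOn with
  | ind u IH =>
    rcases eq_or_ne u (vz hn) with rfl | hne
    · exact ⟨0, Nat.zero_le _, rfl, fun j hj => absurd hj (Nat.not_lt_zero j)⟩
    · have hu : vz hn < u := vz_lt_of_ne hn hne
      obtain ⟨hstep, hlt⟩ := dstep_spec C hn hu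
      obtain ⟨m, hm, hm0, hmne⟩ := IH (dstep C hn u) hlt
      refine ⟨m + 1, ?_, ?_, ?_⟩
      · have := Fin.lt_def.mp hlt
        omega
      · rw [Function.iterate_succ_apply]
        exact hm0
      · intro j hj
        cases j with
        | zero => exact hne
        | succ j =>
          rw [Function.iterate_succ_apply]
          exact hmne j (by omega)


end Main

/-- In an ordered Θ_k-graph on `n` vertices, for every source
`s` and destination `t`: (1) the descending walk of `A^down` starting at `s`
reaches `v₁` in at most `n - 1` hops; (2) the state sequence of `A^up(v₁, t)`
reaches a state whose current vertex is `t` after some `m ≤ 2n` steps; hence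
the two-phase algorithm `A(s, t)` routes from `s` to `t` in at most `3n`
hops. -/
theorem algorithm_A_routes {k n : ℕ} (C : Config k n) (hn : 0 < n)
    (s t : Fin n) :
    ∃ m₁ ≤ n - 1, ∃ w : ℕ → Fin n,
      w 0 = s ∧ w m₁ = ⟨0, hn⟩ ∧
      (∀ j < m₁, w j ≠ ⟨0, hn⟩ ∧ AdownStep C (w j) (w (j + 1))) ∧
      ∃ m₂ ≤ 2 * n, ∃ σ : ℕ → Fin n × Option (Fin n) × Bool,
        σ 0 = (⟨0, hn⟩, none, true) ∧
        (∀ i < m₂, AupStep C hn t (σ i) (σ (i + 1))) ∧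
        (σ m₂).1 = t ∧ m₁ + m₂ ≤ 3 * n := by
  obtain ⟨m₁, hm₁, hm₁0, hm₁ne⟩ := descent C hn s
  refine ⟨m₁, ?_, fun j => (dstep C hn)^[j] s, rfl, hm₁0, ?_, ?_⟩
  · have := s.isLt
    omega
  · intro j hj
    have hne := hm₁ne j hj
    have hu : vz hn < (dstep C hn)^[j] s := vz_lt_of_ne hn hne
    refine ⟨hne, ?_⟩
    show AdownStep C ((dstep C hn)^[j] s) ((dstep C hn)^[j + 1] s)
    rw [Function.iterate_succ_apply']
    exact (dstep_spec C hn hu).1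
  · obtain ⟨L, LNe, LHead, LChain, LLast, LLen⟩ :=
      reach_all C hn t (vz hn) (vz_mem_ancSet C hn t) none
    have hlenpos : 0 < L.length := List.length_pos_iff.mpr LNe
    have hcard : (desc C hn (vz hn)).card ≤ n :=
      le_trans (Finset.card_le_univ _) (by simp)
    refine ⟨L.length - 1, by omega, fun i => L.getD i (vz hn, none, true),
      ?_, ?_, ?_, ?_⟩
    · cases L with
      | nil => exact absurd rfl LNe
      | cons a l =>
        simp only [List.head?_cons, Option.some.injEq] at LHead
        exact LHead
    · intro i hi
      have h1 : i < L.length := by omega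
      have h2 : i + 1 < L.length := by omega
      have := List.isChain_iff_getElem.mp LChain i (by omega)
      show AupStep C hn t (L.getD i (vz hn, none, true)) (L.getD (i + 1) (vz hn, none, true))
      rw [List.getD_eq_getElem _ _ h1, List.getD_eq_getElem _ _ h2]
      exact this
    · have hlast := LLast (L.getLast LNe) (by rw [List.getLast?_eq_getLast LNe]; rfl)
      have h1 : L.length - 1 < L.length := by omega
      show (L.getD (L.length - 1) (vz hn, none, true)).1 = t
      rw [List.getD_eq_getElem _ _ h1]
      rwa [List.getLast_eq_getElem] at hlast
    · have hs := s.isLt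
      omega

end OrderedTheta
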